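/- Let m > 0 and R > 0 be real constants, and define V(γ) = (log₂ e)²·(1 − (1+γ)⁻²) and g(γ) = (log₂(1+γ) − R)/√(V(γ)/m) for γ > 0. Then g is strictly increasing on (0, ∞). -/

import Mathlib

open Real

/-- Channel dispersion `V(γ) = (log₂ e)² · (1 − (1+γ)⁻²)`. -/
noncomputable def Vdisp (γ : ℝ) : ℝ :=
  (Real.logb 2 (Real.exp 1)) ^ 2 * (1 - ((1 + γ)⁻¹) ^ 2)

lemma aux_strictMono (a : ℝ) (ha : 0 < a) :
    StrictMonoOn (fun x : ℝ => x * (Real.log x - a) / Real.sqrt (x ^ 2 - 1)) (Set.Ioi 1) := by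
  apply strictMonoOn_of_deriv_pos (convex_Ioi 1)
  · apply ContinuousOn.div
    · exact (continuousOn_id).mul ((Real.continuousOn_log.mono (by
        intro x hx; simp at hx ⊢; linarith)).sub continuousOn_const)
    · exact (continuousOn_id.pow 2 |>.sub continuousOn_const).sqrt
    · intro x hx
      have hx1 : (1:ℝ) < x := hx
      have hx2 : 0 < x ^ 2 - 1 := by nlinarith
      exact ne_of_gt (Real.sqrt_pos.mpr hx2)
  · intro x hx
    rw [interior_Ioi] at hx
    have hx1 : (1:ℝ) < x := hx
    have hx0 : (0:ℝ) < x := lt_trans one_pos hx1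
    have hx2 : 0 < x ^ 2 - 1 := by nlinarith
    have hv : 0 < Real.sqrt (x ^ 2 - 1) := Real.sqrt_pos.mpr hx2
    have hs : Real.sqrt (x ^ 2 - 1) ^ 2 = x ^ 2 - 1 := Real.sq_sqrt hx2.le
    have hu : HasDerivAt (fun x : ℝ => x * (Real.log x - a)) (Real.log x - a + 1) x := by
      have := (hasDerivAt_id x).mul ((Real.hasDerivAt_log (ne_of_gt hx0)).sub_const a)
      refine this.congr_deriv ?_
      simp [hx0.ne']
    have hsq : HasDerivAt (fun x : ℝ => Real.sqrt (x ^ 2 - 1)) (x / Real.sqrt (x ^ 2 - 1)) x := by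
      have hinner : HasDerivAt (fun x : ℝ => x ^ 2 - 1) (2 * x) x := by
        simpa using (hasDerivAt_pow 2 x).sub_const 1
      have := (Real.hasDerivAt_sqrt (ne_of_gt hx2)).comp x hinner
      refine this.congr_deriv ?_
      field_simp
    have hdiv : HasDerivAt (fun x : ℝ => x * (Real.log x - a) / Real.sqrt (x ^ 2 - 1)) _ x :=
      hu.div hsq (ne_of_gt hv)
    rw [hdiv.deriv]
    have hlog : Real.log x < x - 1 := Real.log_lt_sub_one_of_pos hx0 (ne_of_gt hx1)
    have hnum : 0 < (Real.log x - a + 1) * Real.sqrt (x ^ 2 - 1) -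
        x * (Real.log x - a) * (x / Real.sqrt (x ^ 2 - 1)) := by
      have key : (Real.log x - a + 1) * Real.sqrt (x ^ 2 - 1) -
          x * (Real.log x - a) * (x / Real.sqrt (x ^ 2 - 1)) =
          (x ^ 2 - 1 - (Real.log x - a)) / Real.sqrt (x ^ 2 - 1) := by
        rw [eq_div_iff (ne_of_gt hv)]
        field_simp
        nlinarith [hs]
      rw [key]
      apply div_pos _ hv
      nlinarith
    exact div_pos hnum (by positivity)

lemma eq_aux (m R γ : ℝ) (hm : 0 < m) (hγ : 0 < γ) :
    (Real.logb 2 (1 + γ) - R) / Real.sqrt (Vdisp γ / m) =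
    Real.sqrt m * ((1 + γ) * (Real.log (1 + γ) - R * Real.log 2) /
      Real.sqrt ((1 + γ) ^ 2 - 1)) := by
  set x := 1 + γ with hxdef
  have hx1 : (1:ℝ) < x := by simp [hxdef]; linarith
  have hx0 : (0:ℝ) < x := lt_trans one_pos hx1
  have hx2 : 0 < x ^ 2 - 1 := by nlinarith
  have hlog2 : 0 < Real.log 2 := Real.log_pos (by norm_num)
  have hV : Vdisp γ / m = (x ^ 2 - 1) / (x ^ 2 * (Real.log 2) ^ 2 * m) := by
    simp only [Vdisp, Real.logb, Real.log_exp, ← hxdef]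
    rw [div_eq_div_iff (by positivity) (by positivity)]
    have hx0' : x ≠ 0 := hx0.ne'
    field_simp
  have hsq : Real.sqrt (x ^ 2 * (Real.log 2) ^ 2 * m) = x * Real.log 2 * Real.sqrt m := by
    rw [show x ^ 2 * (Real.log 2) ^ 2 * m = (x * Real.log 2) ^ 2 * m by ring,
      Real.sqrt_mul (by positivity), Real.sqrt_sq (by positivity)]
  have hsqrtdiv : Real.sqrt (Vdisp γ / m) =
      Real.sqrt (x ^ 2 - 1) / (x * Real.log 2 * Real.sqrt m) := by
    rw [hV, Real.sqrt_div hx2.le, hsq]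
  have hlogb : Real.logb 2 x - R = (Real.log x - R * Real.log 2) / Real.log 2 := by
    simp only [Real.logb]
    field_simp
  rw [hsqrtdiv, hlogb]
  have hsv : 0 < Real.sqrt (x ^ 2 - 1) := Real.sqrt_pos.mpr hx2
  have hsm : 0 < Real.sqrt m := Real.sqrt_pos.mpr hm
  field_simp

theorem bler_argument_strictMonoOn (m R : ℝ) (hm : 0 < m) (hR : 0 < R) :
    StrictMonoOn (fun γ : ℝ => (Real.logb 2 (1 + γ) - R) / Real.sqrt (Vdisp γ / m))
      (Set.Ioi 0) := by
  intro γ1 h1 γ2 h2 hlt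
  have h1' : (0:ℝ) < γ1 := h1
  have h2' : (0:ℝ) < γ2 := h2
  simp only
  rw [eq_aux m R γ1 hm h1', eq_aux m R γ2 hm h2']
  have hsm : 0 < Real.sqrt m := Real.sqrt_pos.mpr hm
  apply mul_lt_mul_of_pos_left _ hsm
  have ha : 0 < R * Real.log 2 := mul_pos hR (Real.log_pos (by norm_num))
  exact aux_strictMono (R * Real.log 2) ha (by simp; linarith) (by simp; linarith) (by linarith)
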